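/- Let m and n be integers with m > n ≥ 2, m odd, n even, m ≥ 81 and 1/2 ≤ n/m ≤ 0.82. Then for every real number x with 5.78/m ≤ x ≤ π − 5.78/m and m·sin(x) ≠ sin(m·x), one has g(x) = (n·sin(m·x) − m·sin(n·x))/(m·sin(x) − sin(m·x)) ≥ −n(m² − n²)/(m² − 1). -/

import Mathlib

open Real

set_option maxHeartbeats 1000000 in
theorem stmt_2 (m n : ℤ) (hmn : m > n) (hn2 : n ≥ 2) (hmodd : Odd m) (hneven : Even n)
    (hm81 : m ≥ 81) (hlo : (1/2 : ℝ) ≤ (n : ℝ) / m) (hhi : (n : ℝ) / m ≤ 0.82)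
    (x : ℝ) (hx1 : 5.78 / m ≤ x) (hx2 : x ≤ π - 5.78 / m)
    (hx : (m : ℝ) * Real.sin x ≠ Real.sin (m * x)) :
    ((n : ℝ) * Real.sin (m * x) - (m : ℝ) * Real.sin (n * x)) /
        ((m : ℝ) * Real.sin x - Real.sin (m * x)) ≥
      -((n : ℝ) * ((m : ℝ) ^ 2 - (n : ℝ) ^ 2)) / ((m : ℝ) ^ 2 - 1) := by
  have hM : (81:ℝ) ≤ (m:ℝ) := by exact_mod_cast hm81
  have hM0 : (0:ℝ) < (m:ℝ) := by linarith
  have hN2 : (2:ℝ) ≤ (n:ℝ) := by exact_mod_cast hn2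
  rw [div_le_iff₀ hM0] at hhi
  rw [le_div_iff₀ hM0] at hlo
  set M : ℝ := (m:ℝ) with hMdef
  set N : ℝ := (n:ℝ) with hNdef
  set y : ℝ := 5.78 / M with hy
  have hy0 : 0 < y := by positivity
  have hyle : y ≤ 0.0714 := by
    rw [hy, div_le_iff₀ hM0]; nlinarith
  have hpi : (3.14:ℝ) < π := by
    have := Real.pi_gt_d6; linarith
  -- sin y ≤ sin x
  have hsin : Real.sin y ≤ Real.sin x := by
    rcases le_or_gt x (π/2) with hxh | hxh
    · exact Real.sin_le_sin_of_le_of_le_pi_div_two (by linarith) hxh (by linarith)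
    · rw [← Real.sin_pi_sub x]
      exact Real.sin_le_sin_of_le_of_le_pi_div_two (by linarith) (by linarith) (by linarith)
  -- lower bound on sin y
  have hb := Real.sin_bound (x := y) (by rw [abs_of_pos hy0]; linarith)
  rw [abs_of_pos hy0] at hb
  have hsy : y - y^3/6 - y^4 * (5/96) ≤ Real.sin y := by
    have := (abs_le.mp hb).1
    have h5 : y^5 = y^4*y := by ring
    have h6 := mul_le_mul_of_nonneg_left hyle (pow_nonneg hy0.le 4)
    have h7 := pow_nonneg hy0.le 4
    linarith
  have hM2 : (6561:ℝ) ≤ M^2 := by nlinarith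
  -- M * sin x ≥ 5.78 - 33/M^2, in multiplied form
  have hs1' : 5.78 * M^2 - 33 ≤ Real.sin x * M^3 := by
    have h1 : y - y^3/6 - y^4 * (5/96) ≤ Real.sin x := le_trans hsy hsin
    have h2 : (y - y^3/6 - y^4*(5/96)) * M^3 ≤ Real.sin x * M^3 :=
      mul_le_mul_of_nonneg_right h1 (by positivity)
    have h3 : (y - y^3/6 - y^4*(5/96)) * M^3
        = 5.78 * M^2 - (5.78^3/6) - (5.78^4 * (5/96)) / M := by
      rw [hy]; field_simp
    rw [h3] at h2
    have h4 : (5.78^4 * (5/96)) / M ≤ 0.72 := by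
      rw [div_le_iff₀ hM0]; nlinarith
    norm_num at h2 ⊢
    linarith
  have hS : (5.77:ℝ) ≤ M * Real.sin x := by
    by_contra h
    push_neg at h
    have h2 := mul_lt_mul_of_pos_right h (show (0:ℝ) < M^2 by positivity)
    nlinarith [h2, hs1', hM2]
  have hD : 0 < M * Real.sin x - Real.sin (M * x) := by
    have := Real.sin_le_one (M * x)
    linarith
  have hP : 0 < M^2 - 1 := by nlinarith
  -- key inequality
  have hprod : 0.1476 * M^2 ≤ N * (M - N) := by
    nlinarith [mul_nonneg (by linarith : (0:ℝ) ≤ 0.82*M - N) (by linarith : (0:ℝ) ≤ N - 0.18*M)]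
  have hSp : (0:ℝ) ≤ M * Real.sin x + 1 := by linarith
  have hkey2 : M^2 - 1 ≤ 0.1476 * M^2 * (M * Real.sin x + 1) := by
    nlinarith [hs1', hM2]
  have hkey : M^2 - 1 ≤ N * (M - N) * (M * Real.sin x + 1) := by
    nlinarith [mul_le_mul_of_nonneg_right hprod hSp]
  have hMN : (0:ℝ) ≤ M + N := by linarith
  have hkey3 : (M + N) * (M^2 - 1) ≤ N * (M^2 - N^2) * (M * Real.sin x + 1) := by
    nlinarith [mul_le_mul_of_nonneg_left hkey hMN]
  -- final
  have hA : -1 ≤ Real.sin (M * x) := Real.neg_one_le_sin _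
  have hB : Real.sin (N * x) ≤ 1 := Real.sin_le_one _
  rw [ge_iff_le, div_le_div_iff₀ hP hD]
  nlinarith [mul_nonneg (by nlinarith : (0:ℝ) ≤ N * (N^2 - 1)) (by linarith : (0:ℝ) ≤ Real.sin (M*x) + 1),
    mul_nonneg (by nlinarith : (0:ℝ) ≤ M * (M^2 - 1)) (by linarith : (0:ℝ) ≤ 1 - Real.sin (N*x)),
    hkey3]
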